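/- Let n ≥ 3 and let v1,...,vn be points in general position in the plane such that all segments from v1 to the other points are crossed by no other segment v_i v_j (i,j ≠ 1). Then the points v2,...,v_n are in convex position. -/

import Mathlib

noncomputable section

/-- A point of the plane. -/
abbrev Pt : Type := ℝ × ℝ

/-- Two straight segments cross: they meet at a point interior to both. -/
def SegCross (p q r s : Pt) : Prop :=
  (openSegment ℝ p q ∩ openSegment ℝ r s).Nonempty

/-- Points in general position: distinct, and no three collinear. -/
def GenPos {V : Type*} (pos : V → Pt) : Prop :=
  Function.Injective pos ∧
    ∀ a b c : V, a ≠ b → b ≠ c → a ≠ c →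
      ¬ Collinear ℝ ({pos a, pos b, pos c} : Set Pt)

lemma fin3_aux : ∀ i : Fin 3, ∃ j k : Fin 3, i ≠ j ∧ i ≠ k ∧ j ≠ k ∧
    ∀ l : Fin 3, l = i ∨ l = j ∨ l = k := by decide

lemma sum_three {M : Type*} [AddCommMonoid M] (F : Fin 3 → M) {i j k : Fin 3}
    (huniv : ∀ l : Fin 3, l = i ∨ l = j ∨ l = k) (hij : i ≠ j) (hik : i ≠ k) (hjk : j ≠ k) :
    ∑ l, F l = F i + F j + F k := by
  have h : (Finset.univ : Finset (Fin 3)) = {i, j, k} := by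
    symm; apply Finset.eq_univ_iff_forall.mpr
    intro l
    simp only [Finset.mem_insert, Finset.mem_singleton]
    exact huniv l
  rw [h, Finset.sum_insert (by simp [hij, hik]), Finset.sum_insert (by simp [hjk]),
    Finset.sum_singleton, add_assoc]

lemma range_fin3 {α : Type*} (g : Fin 3 → α) : Set.range g = {g 0, g 1, g 2} := by
  ext z
  simp only [Set.mem_range, Set.mem_insert_iff, Set.mem_singleton_iff]
  constructor
  · rintro ⟨i, rfl⟩
    fin_cases i
    exacts [Or.inl rfl, Or.inr (Or.inl rfl), Or.inr (Or.inr rfl)]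
  · rintro (rfl | rfl | rfl)
    exacts [⟨0, rfl⟩, ⟨1, rfl⟩, ⟨2, rfl⟩]

lemma coord_combo (b : AffineBasis (Fin 3) ℝ Pt) (c : Fin 3 → ℝ) (h1 : ∑ i, c i = 1)
    (l : Fin 3) : b.coord l (∑ i, c i • b i) = c l := by
  rw [← Finset.univ.affineCombination_eq_linear_combination _ c h1]
  exact b.coord_apply_combination_of_mem (Finset.mem_univ l) h1

lemma mem_segment_of_coord_zero (b : AffineBasis (Fin 3) ℝ Pt) {x : Pt} {i j k : Fin 3}
    (huniv : ∀ l : Fin 3, l = i ∨ l = j ∨ l = k) (hij : i ≠ j) (hik : i ≠ k) (hjk : j ≠ k)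
    (h0 : b.coord i x = 0) (hnn : ∀ l, 0 ≤ b.coord l x) :
    x ∈ segment ℝ (b j) (b k) := by
  refine ⟨b.coord j x, b.coord k x, hnn j, hnn k, ?_, ?_⟩
  · have h1 := b.sum_coord_apply_eq_one x
    rw [sum_three (fun l => b.coord l x) huniv hij hik hjk, h0] at h1
    linarith
  · have hx := b.linear_combination_coord_eq_self x
    rw [sum_three (fun l => b.coord l x • b l) huniv hij hik hjk, h0, zero_smul, zero_add] at hx
    exact hx

lemma collinear_of_mem_openSegment {p q z : Pt} (h : z ∈ openSegment ℝ p q) :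
    Collinear ℝ ({p, z, q} : Set Pt) :=
  (mem_segment_iff_wbtw.mp (openSegment_subset_segment ℝ p q h)).collinear

lemma coord_pos (b : AffineBasis (Fin 3) ℝ Pt) {x : Pt}
    (hx : x ∈ convexHull ℝ (Set.range ⇑b))
    (hcol : ∀ i j : Fin 3, i ≠ j → ¬ Collinear ℝ ({x, b i, b j} : Set Pt)) (i : Fin 3) :
    0 < b.coord i x := by
  have hnn : ∀ l, 0 ≤ b.coord l x := by
    rw [b.convexHull_eq_nonneg_coord] at hx; exact hx
  rcases (hnn i).lt_or_eq with h | h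
  · exact h
  obtain ⟨j, k, hij, hik, hjk, huniv⟩ := fin3_aux i
  have hseg := mem_segment_of_coord_zero b huniv hij hik hjk h.symm hnn
  have hcl : Collinear ℝ ({x, b j, b k} : Set Pt) := by
    have hw : Wbtw ℝ (b j) x (b k) := mem_segment_iff_wbtw.mp hseg
    have := hw.collinear
    rwa [Set.insert_comm] at this
  exact (hcol j k hjk hcl).elim

lemma exists_coord_neg (b : AffineBasis (Fin 3) ℝ Pt) {x : Pt}
    (h : x ∉ convexHull ℝ (Set.range ⇑b)) : ∃ i, b.coord i x < 0 := by
  by_contra hc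
  push_neg at hc
  exact h (by rw [b.convexHull_eq_nonneg_coord]; exact hc)

lemma crossing (b : AffineBasis (Fin 3) ℝ Pt) (P Q : Pt)
    (hP : ∀ i, 0 < b.coord i P)
    (hQ : ∃ i, b.coord i Q < 0)
    (hQP : ∀ i, b i ∉ openSegment ℝ P Q) :
    ∃ l m : Fin 3, l ≠ m ∧ ((openSegment ℝ P Q) ∩ openSegment ℝ (b l) (b m)).Nonempty := by
  classical
  obtain ⟨i₁, hi₁⟩ := hQ
  set T : Finset (Fin 3) := Finset.univ.filter (fun i => b.coord i Q < 0) with hT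
  have hTne : T.Nonempty := ⟨i₁, by simp [hT, hi₁]⟩
  obtain ⟨i₀, hi₀T, hmin⟩ := T.exists_min_image
    (fun i => b.coord i P / (b.coord i P - b.coord i Q)) hTne
  have hq₀ : b.coord i₀ Q < 0 := by simpa [hT] using hi₀T
  set t : ℝ := b.coord i₀ P / (b.coord i₀ P - b.coord i₀ Q) with htdef
  have hp₀ := hP i₀
  have hden : (0:ℝ) < b.coord i₀ P - b.coord i₀ Q := by linarith
  have ht0 : 0 < t := div_pos hp₀ hden
  have ht1 : t < 1 := (div_lt_one hden).mpr (by linarith)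
  set y : Pt := (1 - t) • P + t • Q with hydef
  have hy : y ∈ openSegment ℝ P Q := ⟨1 - t, t, by linarith, ht0, by ring, rfl⟩
  have hcoord : ∀ l, b.coord l y = (1 - t) * b.coord l P + t * b.coord l Q := by
    intro l
    have h1 : y = AffineMap.lineMap P Q t := by
      rw [AffineMap.lineMap_apply_module]
    rw [h1, AffineMap.apply_lineMap, AffineMap.lineMap_apply_module, smul_eq_mul, smul_eq_mul]
  have hnn : ∀ l, 0 ≤ b.coord l y := by
    intro l
    rw [hcoord l]
    by_cases hl : b.coord l Q < 0
    · have hlT : l ∈ T := by simp [hT, hl]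
      have hminl := hmin l hlT
      have hdenl : (0:ℝ) < b.coord l P - b.coord l Q := by linarith [hP l]
      have h2 : t * (b.coord l P - b.coord l Q) ≤ b.coord l P :=
        (le_div_iff₀ hdenl).mp hminl
      nlinarith
    · push_neg at hl
      have := hP l
      nlinarith
  have hzero : b.coord i₀ y = 0 := by
    rw [hcoord i₀, htdef]
    field_simp
    ring
  obtain ⟨j, k, hij, hik, hjk, huniv⟩ := fin3_aux i₀
  have hyseg : y ∈ segment ℝ (b j) (b k) :=
    mem_segment_of_coord_zero b huniv hij hik hjk hzero hnn
  have hyj : b j ≠ y := fun h => hQP j (h ▸ hy)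
  have hyk : b k ≠ y := fun h => hQP k (h ▸ hy)
  exact ⟨j, k, hjk, y, hy, mem_openSegment_of_ne_left_right hyj hyk hyseg⟩

/-- If in a complete geometric graph on `v 0, …, v (n-1)` (`n ≥ 3`, general position)
no segment from `v 0` is crossed by any segment `v i v j` with `i, j ≠ 0`, then the
points `v i`, `i ≠ 0`, are in convex position. -/
theorem uncrossed_star_convex_position (n : ℕ) (hn : 3 ≤ n) (v : Fin n → Pt)
    (hgen : GenPos v)
    (huncrossed : ∀ j i k : Fin n, j ≠ ⟨0, by omega⟩ → i ≠ ⟨0, by omega⟩ →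
      k ≠ ⟨0, by omega⟩ → i ≠ k →
      ¬ SegCross (v ⟨0, by omega⟩) (v j) (v i) (v k)) :
    ConvexIndependent ℝ (fun x : {i : Fin n // i ≠ ⟨0, by omega⟩} => v x.1) := by
  classical
  intro s x hx
  by_contra hxs
  have hinj := hgen.1
  have hcol3 := hgen.2
  have h0n : 0 < n := by omega
  let o : Fin n := ⟨0, h0n⟩
  rw [convexHull_eq_union] at hx
  simp only [Set.mem_iUnion] at hx
  obtain ⟨t, hts, hai, hxt⟩ := hx
  have hmem : ∀ p ∈ t, ∃ y : {i : Fin n // i ≠ (⟨0, h0n⟩ : Fin n)}, y ∈ s ∧ v y.1 = p := by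
    intro p hp
    obtain ⟨y, hy, hyp⟩ := hts hp
    exact ⟨y, hy, hyp⟩
  have hcard : t.card ≤ 3 := by
    have h1 := hai.card_le_finrank_succ
    rw [Fintype.card_coe] at h1
    refine h1.trans (Nat.add_le_add_right (le_trans (Submodule.finrank_le _) ?_) 1)
    simp
  -- x is not any element of s
  have hxnot : ∀ y : {i : Fin n // i ≠ (⟨0, h0n⟩ : Fin n)}, y ∈ s → x.1 ≠ y.1 := by
    intro y hy h
    exact hxs (by rwa [Subtype.ext h])
  have hc03 : t.card = 0 ∨ t.card = 1 ∨ t.card = 2 ∨ t.card = 3 := by omega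
  rcases hc03 with hc | hc | hc | hc
  · rw [Finset.card_eq_zero] at hc
    subst hc
    simp at hxt
  · obtain ⟨A, hA⟩ := Finset.card_eq_one.mp hc
    subst hA
    simp only [Finset.coe_singleton, convexHull_singleton, Set.mem_singleton_iff] at hxt
    obtain ⟨y, hys, hyA⟩ := hmem A (by simp)
    exact hxnot y hys (hinj (by rw [hxt, hyA]))
  · obtain ⟨A, B, hAB, hA⟩ := Finset.card_eq_two.mp hc
    subst hA
    rw [Finset.coe_insert, Finset.coe_singleton, convexHull_pair] at hxt
    obtain ⟨ya, hyas, hva⟩ := hmem A (by simp)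
    obtain ⟨yb, hybs, hvb⟩ := hmem B (by simp)
    have hxa : x.1 ≠ ya.1 := hxnot ya hyas
    have hxb : x.1 ≠ yb.1 := hxnot yb hybs
    have hab : ya.1 ≠ yb.1 := fun h => hAB (by rw [← hva, ← hvb, h])
    have hcl : Collinear ℝ ({v ya.1, v x.1, v yb.1} : Set Pt) := by
      rw [hva, hvb]
      have hw : Wbtw ℝ A (v x.1) B := mem_segment_iff_wbtw.mp hxt
      exact hw.collinear
    exact hcol3 ya.1 x.1 yb.1 hxa.symm hxb hab hcl
  · obtain ⟨A, B, C, hAB, hAC, hBC, hA⟩ := Finset.card_eq_three.mp hc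
    obtain ⟨ya, hyas, hva⟩ := hmem A (by simp [hA])
    obtain ⟨yb, hybs, hvb⟩ := hmem B (by simp [hA])
    obtain ⟨yc, hycs, hvc⟩ := hmem C (by simp [hA])
    set a := ya.1
    set bb := yb.1
    set cc := yc.1
    have hab : a ≠ bb := fun h => hAB (by rw [← hva, ← hvb, h])
    have hac : a ≠ cc := fun h => hAC (by rw [← hva, ← hvc, h])
    have hbc : bb ≠ cc := fun h => hBC (by rw [← hvb, ← hvc, h])
    let idx : Fin 3 → Fin n := ![a, bb, cc]
    let f : Fin 3 → Pt := fun i => v (idx i)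
    have hfa : f 0 = A := hva
    have hfb : f 1 = B := hvb
    have hfc : f 2 = C := hvc
    have hrange : Set.range f = ({A, B, C} : Set Pt) := by
      rw [range_fin3, hfa, hfb, hfc]
    have hidx0 : ∀ i : Fin 3, idx i ≠ o := by
      intro i
      fin_cases i
      exacts [ya.2, yb.2, yc.2]
    have hidxx : ∀ i : Fin 3, idx i ≠ x.1 := by
      intro i
      fin_cases i
      exacts [(hxnot ya hyas).symm, (hxnot yb hybs).symm, (hxnot yc hycs).symm]
    have hidxne : ∀ i j : Fin 3, i ≠ j → idx i ≠ idx j := by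
      intro i j hij
      fin_cases i <;> fin_cases j <;>
        first
          | exact absurd rfl hij
          | exact hab
          | exact hab.symm
          | exact hac
          | exact hac.symm
          | exact hbc
          | exact hbc.symm
    have hind : AffineIndependent ℝ f := by
      rw [affineIndependent_iff_not_collinear, hrange, ← hva, ← hvb, ← hvc]
      exact hcol3 a bb cc hab hbc hac
    have htot : affineSpan ℝ (Set.range f) = ⊤ := by
      rw [hind.affineSpan_eq_top_iff_card_eq_finrank_add_one]; simp
    let b : AffineBasis (Fin 3) ℝ Pt := ⟨f, hind, htot⟩
    have hbv : ∀ i, b i = v (idx i) := fun i => rfl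
    have hw_hull : v x.1 ∈ convexHull ℝ (Set.range ⇑b) := by
      have hcoe : (↑t : Set Pt) = ({A, B, C} : Set Pt) := by rw [hA]; simp
      have : Set.range ⇑b = ({A, B, C} : Set Pt) := hrange
      rw [this]
      rwa [hcoe] at hxt
    have hx0 : x.1 ≠ o := x.2
    -- positivity of coordinates of w = v x.1
    have hωpos : ∀ i, 0 < b.coord i (v x.1) := by
      apply coord_pos b hw_hull
      intro i j hij
      exact hcol3 x.1 (idx i) (idx j) (hidxx i).symm (hidxne i j hij) (hidxx j).symm
    by_cases hP0 : v o ∈ convexHull ℝ (Set.range ⇑b)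
    · -- v 0 inside the triangle
      have hαpos : ∀ i, 0 < b.coord i (v o) := by
        apply coord_pos b hP0
        intro i j hij
        exact hcol3 o (idx i) (idx j) (hidx0 i).symm (hidxne i j hij) (hidx0 j).symm
      obtain ⟨i₀, -, hmin⟩ := Finset.univ.exists_min_image
        (fun i => b.coord i (v o) / b.coord i (v x.1)) ⟨0, Finset.mem_univ 0⟩
      obtain ⟨j, k, hi₀j, hi₀k, hjk, huniv⟩ := fin3_aux i₀
      have hsumα : b.coord i₀ (v o) + b.coord j (v o) + b.coord k (v o) = 1 := by
        have h := b.sum_coord_apply_eq_one (v o)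
        rwa [sum_three (fun l => b.coord l (v o)) huniv hi₀j hi₀k hjk] at h
      have hsumω : b.coord i₀ (v x.1) + b.coord j (v x.1) + b.coord k (v x.1) = 1 := by
        have h := b.sum_coord_apply_eq_one (v x.1)
        rwa [sum_three (fun l => b.coord l (v x.1)) huniv hi₀j hi₀k hjk] at h
      have hP0ex : v o = b.coord i₀ (v o) • b i₀ + b.coord j (v o) • b j
          + b.coord k (v o) • b k := by
        have h := b.linear_combination_coord_eq_self (v o)
        rw [sum_three (fun l => b.coord l (v o) • b l) huniv hi₀j hi₀k hjk] at h
        exact h.symm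
      have hwex : v x.1 = b.coord i₀ (v x.1) • b i₀ + b.coord j (v x.1) • b j
          + b.coord k (v x.1) • b k := by
        have h := b.linear_combination_coord_eq_self (v x.1)
        rw [sum_three (fun l => b.coord l (v x.1) • b l) huniv hi₀j hi₀k hjk] at h
        exact h.symm
      have hα0p : 0 < b.coord i₀ (v o) := hαpos i₀
      have hαjp : 0 < b.coord j (v o) := hαpos j
      have hαkp : 0 < b.coord k (v o) := hαpos k
      have hω0p : 0 < b.coord i₀ (v x.1) := hωpos i₀
      have hωjp : 0 < b.coord j (v x.1) := hωpos j
      have hωkp : 0 < b.coord k (v x.1) := hωpos k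
      have hminj : b.coord i₀ (v o) / b.coord i₀ (v x.1)
          ≤ b.coord j (v o) / b.coord j (v x.1) := hmin j (Finset.mem_univ j)
      have hmink : b.coord i₀ (v o) / b.coord i₀ (v x.1)
          ≤ b.coord k (v o) / b.coord k (v x.1) := hmin k (Finset.mem_univ k)
      -- abstract the six coordinates as scalars
      obtain ⟨a0, e1⟩ : ∃ r : ℝ, b.coord i₀ (v o) = r := ⟨_, rfl⟩
      obtain ⟨aj, e2⟩ : ∃ r : ℝ, b.coord j (v o) = r := ⟨_, rfl⟩
      obtain ⟨ak, e3⟩ : ∃ r : ℝ, b.coord k (v o) = r := ⟨_, rfl⟩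
      obtain ⟨w0, e4⟩ : ∃ r : ℝ, b.coord i₀ (v x.1) = r := ⟨_, rfl⟩
      obtain ⟨wj, e5⟩ : ∃ r : ℝ, b.coord j (v x.1) = r := ⟨_, rfl⟩
      obtain ⟨wk, e6⟩ : ∃ r : ℝ, b.coord k (v x.1) = r := ⟨_, rfl⟩
      rw [e1, e2, e3] at hsumα hP0ex
      rw [e4, e5, e6] at hsumω hwex
      rw [e1] at hα0p
      rw [e2] at hαjp
      rw [e3] at hαkp
      rw [e4] at hω0p
      rw [e5] at hωjp
      rw [e6] at hωkp
      rw [e1, e2, e4, e5] at hminj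
      rw [e1, e3, e4, e6] at hmink
      obtain ⟨t₀, ht₀def⟩ : ∃ r : ℝ, a0 / w0 = r := ⟨_, rfl⟩
      have ht₀ω : t₀ * w0 = a0 := by rw [← ht₀def]; exact div_mul_cancel₀ _ hω0p.ne'
      have ht₀nn : 0 ≤ t₀ := ht₀def ▸ le_of_lt (div_pos hα0p hω0p)
      have hminlej : t₀ * wj ≤ aj := by
        rw [← ht₀def, div_mul_eq_mul_div, div_le_iff₀ hω0p]
        exact (div_le_div_iff₀ hω0p hωjp).mp hminj
      have hminlek : t₀ * wk ≤ ak := by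
        rw [← ht₀def, div_mul_eq_mul_div, div_le_iff₀ hω0p]
        exact (div_le_div_iff₀ hω0p hωkp).mp hmink
      -- the subtriangle basis
      have hindg : AffineIndependent ℝ ![v x.1, b j, b k] := by
        rw [affineIndependent_iff_not_collinear]
        have hrg : Set.range ![v x.1, b j, b k] = ({v x.1, b j, b k} : Set Pt) := by
          rw [range_fin3]; rfl
        rw [hrg]
        exact hcol3 x.1 (idx j) (idx k) (hidxx j).symm (hidxne j k hjk) (hidxx k).symm
      have htotg : affineSpan ℝ (Set.range ![v x.1, b j, b k]) = ⊤ := by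
        rw [hindg.affineSpan_eq_top_iff_card_eq_finrank_add_one]; simp
      let bg : AffineBasis (Fin 3) ℝ Pt := ⟨![v x.1, b j, b k], hindg, htotg⟩
      let idx' : Fin 3 → Fin n := ![x.1, idx j, idx k]
      have hbgv : ∀ l, bg l = v (idx' l) := by
        intro l
        fin_cases l <;> rfl
      have hidx'0 : ∀ l, idx' l ≠ o := by
        intro l
        fin_cases l
        exacts [hx0, hidx0 j, hidx0 k]
      have hidx'i₀ : ∀ l, idx' l ≠ idx i₀ := by
        intro l
        fin_cases l
        exacts [(hidxx i₀).symm, hidxne j i₀ (Ne.symm hi₀j), hidxne k i₀ (Ne.symm hi₀k)]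
      have hidx'ne : ∀ l m : Fin 3, l ≠ m → idx' l ≠ idx' m := by
        intro l m hlm
        fin_cases l <;> fin_cases m <;>
          first
            | exact absurd rfl hlm
            | exact (hidxx j).symm
            | exact (hidxx k).symm
            | exact hidxx j
            | exact hidxx k
            | exact hidxne j k hjk
            | exact hidxne k j hjk.symm
      -- coordinates of v o with respect to bg
      let c : Fin 3 → ℝ := ![t₀, aj - t₀ * wj, ak - t₀ * wk]
      have hcsum : ∑ i, c i = 1 := by
        rw [Fin.sum_univ_three]
        show t₀ + (aj - t₀ * wj) + (ak - t₀ * wk) = 1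
        have hmul : t₀ * w0 + t₀ * wj + t₀ * wk = t₀ := by
          calc t₀ * w0 + t₀ * wj + t₀ * wk = t₀ * (w0 + wj + wk) := by ring
            _ = t₀ * 1 := by rw [hsumω]
            _ = t₀ := mul_one t₀
        linarith [ht₀ω, hsumα, hmul]
      have hP0g : v o = ∑ i, c i • bg i := by
        rw [Fin.sum_univ_three]
        show v o = t₀ • (v x.1) + (aj - t₀ * wj) • b j + (ak - t₀ * wk) • b k
        rw [hP0ex, hwex]
        match_scalars <;> linarith [ht₀ω]
      have hP0coord : ∀ l, bg.coord l (v o) = c l := by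
        intro l
        rw [hP0g]
        exact coord_combo bg c hcsum l
      have hP0g_hull : v o ∈ convexHull ℝ (Set.range ⇑bg) := by
        rw [bg.convexHull_eq_nonneg_coord]
        intro l
        rw [hP0coord l]
        fin_cases l
        · exact ht₀nn
        · exact sub_nonneg.mpr hminlej
        · exact sub_nonneg.mpr hminlek
      have hαgpos : ∀ l, 0 < bg.coord l (v o) := by
        apply coord_pos bg hP0g_hull
        intro l m hlm
        have := hcol3 o (idx' l) (idx' m) (hidx'0 l).symm (hidx'ne l m hlm) (hidx'0 m).symm
        rwa [← hbgv l, ← hbgv m] at this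
      -- coordinates of Q = b i₀ with respect to bg
      let d : Fin 3 → ℝ := ![w0⁻¹, -(wj / w0), -(wk / w0)]
      have hdsum : ∑ i, d i = 1 := by
        rw [Fin.sum_univ_three]
        show w0⁻¹ + -(wj / w0) + -(wk / w0) = 1
        field_simp
        linarith [hsumω]
      have hQg : b i₀ = ∑ i, d i • bg i := by
        rw [Fin.sum_univ_three]
        show b i₀ = w0⁻¹ • (v x.1) + (-(wj / w0)) • b j + (-(wk / w0)) • b k
        rw [hwex]
        match_scalars
        · field_simp
        · field_simp; ring
        · field_simp; ring
      have hQneg : ∃ l, bg.coord l (b i₀) < 0 := by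
        refine ⟨1, ?_⟩
        rw [hQg, coord_combo bg d hdsum 1]
        show -(wj / w0) < 0
        exact neg_neg_of_pos (div_pos hωjp hω0p)
      have hQP' : ∀ l, bg l ∉ openSegment ℝ (v o) (b i₀) := by
        intro l hl
        have hcl := collinear_of_mem_openSegment hl
        rw [hbgv l] at hcl
        exact hcol3 o (idx' l) (idx i₀) (hidx'0 l).symm (hidx'i₀ l) (hidx0 i₀).symm hcl
      obtain ⟨l, m, hlm, y, hy1, hy2⟩ := crossing bg (v o) (b i₀) hαgpos hQneg hQP'
      rw [hbgv l, hbgv m] at hy2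
      exact huncrossed (idx i₀) (idx' l) (idx' m) (hidx0 i₀) (hidx'0 l) (hidx'0 m)
        (hidx'ne l m hlm) ⟨y, hy1, hy2⟩
    · -- v 0 outside the triangle
      have hQneg := exists_coord_neg b hP0
      have hQP : ∀ i, b i ∉ openSegment ℝ (v x.1) (v o) := by
        intro i hi
        have hcl := collinear_of_mem_openSegment hi
        exact hcol3 x.1 (idx i) o (hidxx i).symm (hidx0 i) hx0 hcl
      obtain ⟨l, m, hlm, y, hy1, hy2⟩ := crossing b (v x.1) (v o) hωpos hQneg hQP
      rw [openSegment_symm] at hy1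
      exact huncrossed x.1 (idx l) (idx m) hx0 (hidx0 l) (hidx0 m) (hidxne l m hlm) ⟨y, hy1, hy2⟩
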